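/- Let C = tridiag(−1,1,0) ∈ ℝ^{N×N} and τ > 0, and let M ∈ ℝ^{n×n} be symmetric positive definite and L ∈ ℝ^{n×n} positive semidefinite (xᵀLx ≥ 0). Then the matrix I_N ⊗ L + (C/τ) ⊗ M has positive-definite symmetric part, and hence is invertible. -/

import Mathlib

open Matrix
open scoped Kronecker

lemma stm_kron_quad {N n : ℕ} (A : Matrix (Fin N) (Fin N) ℝ) (B : Matrix (Fin n) (Fin n) ℝ)
    (x : Fin N × Fin n → ℝ) :
    x ⬝ᵥ (A ⊗ₖ B) *ᵥ x =
      ∑ k : Fin N, ∑ l : Fin N, A k l * ((fun i => x (k, i)) ⬝ᵥ B *ᵥ (fun j => x (l, j))) := by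
  simp only [dotProduct, mulVec, kroneckerMap_apply, Fintype.sum_prod_type, Finset.mul_sum,
    Finset.sum_mul]
  apply Finset.sum_congr rfl; intro k _
  rw [Finset.sum_comm]
  apply Finset.sum_congr rfl; intro l _
  apply Finset.sum_congr rfl; intro i _
  apply Finset.sum_congr rfl; intro j _
  ring

/-- extend the block components of `x` by zero, shifted by one:
`zext x 0 = 0`, `zext x (k+1) = x_k` for `k < N`. -/
noncomputable def zext {N n : ℕ} (x : Fin N × Fin n → ℝ) : ℕ → (Fin n → ℝ)
  | 0 => 0
  | (k+1) => if h : k < N then (fun i => x (⟨k, h⟩, i)) else 0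

lemma stm_inner_sum {N n : ℕ} (x : Fin N × Fin n → ℝ) (k : Fin N)
    (q : (Fin n → ℝ) → (Fin n → ℝ) → ℝ) (hq0 : ∀ a, q a 0 = 0) :
    ∑ l : Fin N, (if k = l then (1:ℝ) else if (l : ℕ) + 1 = (k : ℕ) then -1 else 0) *
        q (fun i => x (k, i)) (fun j => x (l, j)) =
      q (zext x (k.1+1)) (zext x (k.1+1)) - q (zext x (k.1+1)) (zext x k.1) := by
  have hz : zext x (k.1+1) = fun i => x (k, i) := by
    simp [zext, k.2]
  have hsplit : ∀ l : Fin N,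
      (if k = l then (1:ℝ) else if (l : ℕ) + 1 = (k : ℕ) then -1 else 0) *
        q (fun i => x (k, i)) (fun j => x (l, j)) =
      (if l = k then q (fun i => x (k, i)) (fun j => x (l, j)) else 0) +
      (if (l : ℕ) + 1 = (k : ℕ) then -q (fun i => x (k, i)) (fun j => x (l, j)) else 0) := by
    intro l
    rcases eq_or_ne k l with h | h
    · subst h; simp
    · simp only [h, Ne.symm h, if_false]; split_ifs <;> ring
  rw [Finset.sum_congr rfl fun l _ => hsplit l, Finset.sum_add_distrib,
    Finset.sum_ite_eq' Finset.univ k]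
  simp only [Finset.mem_univ, if_true, hz]
  congr 1
  rcases Nat.eq_zero_or_pos k.1 with h0 | hpos
  · rw [h0]
    have : ∀ l : Fin N, ((l : ℕ) + 1 = (k : ℕ)) = False := by
      intro l; simp; omega
    simp [this, zext, hq0]
  · obtain ⟨m, hm⟩ : ∃ m, k.1 = m + 1 := ⟨k.1 - 1, by omega⟩
    have hmN : m < N := by omega
    have hcond : ∀ l : Fin N, ((l : ℕ) + 1 = (k : ℕ)) ↔ l = ⟨m, hmN⟩ := by
      intro l; rw [Fin.ext_iff]; simp; omega
    rw [Finset.sum_congr rfl fun l _ => by rw [if_congr (hcond l) rfl rfl],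
      Finset.sum_ite_eq' Finset.univ (⟨m, hmN⟩ : Fin N)]
    simp [hm, zext, hmN]

/-- The space-time discretization matrix `I_N ⊗ L + (C/τ) ⊗ M`, with `C` the
implicit-Euler difference matrix, `M` symmetric positive definite and `L`
positive semidefinite, has positive definite symmetric part and hence is
invertible. -/
theorem space_time_matrix_invertible {N n : ℕ}
    (C : Matrix (Fin N) (Fin N) ℝ)
    (hC : C = Matrix.of fun i j : Fin N =>
      if i = j then (1 : ℝ) else if (j : ℕ) + 1 = (i : ℕ) then -1 else 0)
    (τ : ℝ) (hτ : 0 < τ)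
    (M : Matrix (Fin n) (Fin n) ℝ) (hM : M.PosDef)
    (L : Matrix (Fin n) (Fin n) ℝ) (hL : ∀ x : Fin n → ℝ, 0 ≤ x ⬝ᵥ L.mulVec x) :
    ((((1 : Matrix (Fin N) (Fin N) ℝ) ⊗ₖ L + (τ⁻¹ • C) ⊗ₖ M) +
      ((1 : Matrix (Fin N) (Fin N) ℝ) ⊗ₖ L + (τ⁻¹ • C) ⊗ₖ M)ᵀ).PosDef) ∧
    IsUnit ((1 : Matrix (Fin N) (Fin N) ℝ) ⊗ₖ L + (τ⁻¹ • C) ⊗ₖ M) := by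
  set A : Matrix (Fin N × Fin n) (Fin N × Fin n) ℝ :=
    (1 : Matrix (Fin N) (Fin N) ℝ) ⊗ₖ L + (τ⁻¹ • C) ⊗ₖ M with hA
  -- quadratic form of the transpose equals that of A
  have htrans : ∀ (B : Matrix (Fin N × Fin n) (Fin N × Fin n) ℝ) (x : Fin N × Fin n → ℝ),
      x ⬝ᵥ Bᵀ *ᵥ x = x ⬝ᵥ B *ᵥ x := by
    intro B x
    rw [Matrix.mulVec_transpose, Matrix.dotProduct_mulVec, dotProduct_comm]
  -- the inner product given by M
  set q : (Fin n → ℝ) → (Fin n → ℝ) → ℝ := fun a b => a ⬝ᵥ M *ᵥ b with hq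
  have hq0 : ∀ a, q a 0 = 0 := by intro a; simp [hq]
  have hMT : Mᵀ = M := by
    rw [← Matrix.conjTranspose_eq_transpose_of_trivial]; exact hM.isHermitian
  have hMsym : ∀ i j, M j i = M i j := fun i j => congrFun (congrFun hMT i) j
  have hqsymm : ∀ a b, q a b = q b a := by
    intro a b
    simp only [hq, dotProduct, mulVec, Finset.mul_sum]
    rw [Finset.sum_comm]
    apply Finset.sum_congr rfl; intro i _
    apply Finset.sum_congr rfl; intro j _
    rw [hMsym i j]; ring
  have hqnn : ∀ a, 0 ≤ q a a := fun a => by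
    have := hM.posSemidef.dotProduct_mulVec_nonneg a; simpa [hq] using this
  have hqpos : ∀ a, a ≠ 0 → 0 < q a a := fun a ha => by
    have := hM.dotProduct_mulVec_pos ha; simpa [hq] using this
  have hqzero : ∀ a, q a a = 0 → a = 0 := by
    intro a h
    by_contra hne
    exact absurd h (ne_of_gt (hqpos a hne))
  have hbil : ∀ a b, q (a - b) (a - b) = q a a - 2 * q a b + q b b := by
    intro a b
    have h1 : q b a = q a b := hqsymm b a
    simp only [hq, Matrix.mulVec_sub, sub_dotProduct, dotProduct_sub] at *
    linarith
  -- key positivity of the quadratic form of A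
  have key : ∀ x : Fin N × Fin n → ℝ, x ≠ 0 → 0 < x ⬝ᵥ A *ᵥ x := by
    intro x hx
    set z : ℕ → (Fin n → ℝ) := zext x with hzdef
    have hterm1 : 0 ≤ x ⬝ᵥ ((1 : Matrix (Fin N) (Fin N) ℝ) ⊗ₖ L) *ᵥ x := by
      rw [stm_kron_quad]
      apply Finset.sum_nonneg
      intro k _
      have : ∀ l : Fin N, (1 : Matrix (Fin N) (Fin N) ℝ) k l *
          ((fun i => x (k, i)) ⬝ᵥ L *ᵥ (fun j => x (l, j))) =
          if l = k then ((fun i => x (k, i)) ⬝ᵥ L *ᵥ (fun j => x (l, j))) else 0 := by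
        intro l
        rcases eq_or_ne l k with h | h
        · simp [h, Matrix.one_apply]
        · simp [h, Matrix.one_apply, Ne.symm h]
      rw [Finset.sum_congr rfl fun l _ => this l, Finset.sum_ite_eq' Finset.univ k]
      simpa using hL (fun i => x (k, i))
    -- the C-part
    have hQF : x ⬝ᵥ (C ⊗ₖ M) *ᵥ x =
        ∑ m ∈ Finset.range N, (q (z (m+1)) (z (m+1)) - q (z (m+1)) (z m)) := by
      rw [hC, stm_kron_quad]
      have step : ∀ k : Fin N, ∑ l : Fin N,
          (Matrix.of fun i j : Fin N => if i = j then (1:ℝ) else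
            if (j : ℕ) + 1 = (i : ℕ) then -1 else 0) k l *
            ((fun i => x (k, i)) ⬝ᵥ M *ᵥ (fun j => x (l, j))) =
          q (z (k.1+1)) (z (k.1+1)) - q (z (k.1+1)) (z k.1) :=
        fun k => stm_inner_sum x k q hq0
      rw [Finset.sum_congr rfl fun k _ => step k]
      exact Fin.sum_univ_eq_sum_range (fun m => q (z (m+1)) (z (m+1)) - q (z (m+1)) (z m)) N
    have hsum : x ⬝ᵥ (C ⊗ₖ M) *ᵥ x =
        (q (z N) (z N) + ∑ m ∈ Finset.range N, q (z (m+1) - z m) (z (m+1) - z m)) / 2 := by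
      rw [hQF]
      have hterm : ∀ m, q (z (m+1)) (z (m+1)) - q (z (m+1)) (z m) =
          ((q (z (m+1)) (z (m+1)) - q (z m) (z m)) + q (z (m+1) - z m) (z (m+1) - z m)) / 2 := by
        intro m
        have := hbil (z (m+1)) (z m)
        linarith
      rw [Finset.sum_congr rfl fun m _ => hterm m, ← Finset.sum_div, Finset.sum_add_distrib,
        Finset.sum_range_sub (fun m => q (z m) (z m))]
      rw [show q (z 0) (z 0) = 0 from hq0 0]
      ring
    -- positivity of the C-part
    have hCpos : 0 < x ⬝ᵥ (C ⊗ₖ M) *ᵥ x := by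
      obtain ⟨p, hp⟩ := Function.ne_iff.mp hx
      obtain ⟨k0, i0⟩ := p
      have hzk0 : z (k0.1 + 1) ≠ 0 := by
        have : z (k0.1 + 1) = fun i => x (k0, i) := by
          simp [hzdef, zext, k0.2]
        rw [this]
        intro hcontra
        exact hp (by simpa using congrFun hcontra i0)
      rw [hsum]
      have hnn1 : 0 ≤ q (z N) (z N) := hqnn _
      have hnn2 : ∀ m ∈ Finset.range N, 0 ≤ q (z (m+1) - z m) (z (m+1) - z m) :=
        fun m _ => hqnn _
      have hsumnn : 0 ≤ ∑ m ∈ Finset.range N, q (z (m+1) - z m) (z (m+1) - z m) :=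
        Finset.sum_nonneg hnn2
      rcases lt_or_eq_of_le (by positivity :
          (0:ℝ) ≤ q (z N) (z N) + ∑ m ∈ Finset.range N, q (z (m+1) - z m) (z (m+1) - z m))
        with hlt | heq
      · linarith
      · exfalso
        have hN0 : q (z N) (z N) = 0 := by linarith
        have hS0 : ∑ m ∈ Finset.range N, q (z (m+1) - z m) (z (m+1) - z m) = 0 := by linarith
        have hall : ∀ m ∈ Finset.range N, q (z (m+1) - z m) (z (m+1) - z m) = 0 :=
          (Finset.sum_eq_zero_iff_of_nonneg hnn2).mp hS0
        have hstep : ∀ m, m < N → z (m+1) = z m := by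
          intro m hm
          have := hqzero _ (hall m (Finset.mem_range.mpr hm))
          exact sub_eq_zero.mp this
        have hzero : ∀ m, m ≤ N → z m = 0 := by
          intro m
          induction m with
          | zero => intro _; rfl
          | succ m ih => intro h; rw [hstep m (by omega)]; exact ih (by omega)
        exact hzk0 (hzero (k0.1 + 1) (by omega))
    -- assemble
    have hexp : x ⬝ᵥ A *ᵥ x =
        x ⬝ᵥ ((1 : Matrix (Fin N) (Fin N) ℝ) ⊗ₖ L) *ᵥ x + τ⁻¹ * (x ⬝ᵥ (C ⊗ₖ M) *ᵥ x) := by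
      rw [hA, Matrix.add_mulVec, dotProduct_add, Matrix.smul_kronecker,
        Matrix.smul_mulVec, dotProduct_smul, smul_eq_mul]
    rw [hexp]
    have hτinv : 0 < τ⁻¹ := inv_pos.mpr hτ
    have := mul_pos hτinv hCpos
    linarith
  -- conclusion
  have hPD : (A + Aᵀ).PosDef := by
    refine Matrix.PosDef.of_dotProduct_mulVec_pos ?_ ?_
    · rw [Matrix.IsHermitian, Matrix.conjTranspose_eq_transpose_of_trivial,
        Matrix.transpose_add, Matrix.transpose_transpose]
      exact add_comm _ _
    · intro x hx
      rw [star_trivial, Matrix.add_mulVec, dotProduct_add, htrans]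
      have := key x hx
      linarith
  refine ⟨hPD, ?_⟩
  rw [← Matrix.mulVec_injective_iff_isUnit]
  intro u v huv
  by_contra hne
  have hsub : A *ᵥ (u - v) = 0 := by rw [Matrix.mulVec_sub, huv, sub_self]
  have hne' : u - v ≠ 0 := sub_ne_zero.mpr (fun h => hne (by simp [h]))
  have := key (u - v) hne'
  rw [hsub] at this
  simp at this
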